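/- If S is a safe set of a connected graph G with |S| = k, then G − S has at most k·Δ(G) connected components, each of size at most k; consequently |V(G)| ≤ k + k²·Δ(G). -/
import Mathlib


variable {V : Type*}

/-- Two vertex sets are adjacent if some edge joins them. -/
def SetsAdj (G : SimpleGraph V) (A B : Set V) : Prop :=
  ∃ a ∈ A, ∃ b ∈ B, G.Adj a b

/-- `u` and `v` are connected inside the induced subgraph `G[S]`. -/
def ReachIn (G : SimpleGraph V) (S : Set V) (u v : V) : Prop :=
  ∃ (hu : u ∈ S) (hv : v ∈ S), (G.induce S).Reachable ⟨u, hu⟩ ⟨v, hv⟩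

/-- `C` is (the vertex set of) a connected component of the induced subgraph `G[S]`. -/
def IsCompOf (G : SimpleGraph V) (S C : Set V) : Prop :=
  ∃ v ∈ S, C = {u | ReachIn G S u v}

/-- A safe set: nonempty, and no component of `G[S]` is adjacent to a larger
component of `G - S`. -/
def IsSafeSet (G : SimpleGraph V) (S : Set V) : Prop :=
  S.Nonempty ∧ ∀ C D : Set V, IsCompOf G S C → IsCompOf G Sᶜ D →
    SetsAdj G C D → D.ncard ≤ C.ncard

/-- A connected safe set. -/
def IsConnSafeSet (G : SimpleGraph V) (S : Set V) : Prop :=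
  IsSafeSet G S ∧ (G.induce S).Connected

/-- The safe number: minimum size of a safe set. -/
noncomputable def sNum (G : SimpleGraph V) : ℕ :=
  sInf {n | ∃ S : Set V, IsSafeSet G S ∧ S.ncard = n}

/-- The connected safe number: minimum size of a connected safe set. -/
noncomputable def csNum (G : SimpleGraph V) : ℕ :=
  sInf {n | ∃ S : Set V, IsConnSafeSet G S ∧ S.ncard = n}

lemma reachIn_refl {G : SimpleGraph V} {T : Set V} {v : V} (hv : v ∈ T) : ReachIn G T v v :=
  ⟨hv, hv, .refl _⟩

lemma reachIn_symm {G : SimpleGraph V} {T : Set V} {u v : V} :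
    ReachIn G T u v → ReachIn G T v u := fun ⟨hu, hv, h⟩ => ⟨hv, hu, h.symm⟩

lemma reachIn_trans {G : SimpleGraph V} {T : Set V} {u v w : V} :
    ReachIn G T u v → ReachIn G T v w → ReachIn G T u w :=
  fun ⟨hu, hv, h⟩ ⟨_, hw, h'⟩ => ⟨hu, hw, h.trans h'⟩

lemma adj_reachIn {G : SimpleGraph V} {T : Set V} {a b : V} (hab : G.Adj a b)
    (ha : a ∈ T) (hb : b ∈ T) : ReachIn G T a b :=
  ⟨ha, hb, SimpleGraph.Adj.reachable hab⟩

lemma IsCompOf.subset {G : SimpleGraph V} {T C : Set V} (h : IsCompOf G T C) : C ⊆ T := by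
  obtain ⟨v, hv, rfl⟩ := h
  exact fun u hu => hu.1

lemma IsCompOf.eq_of_mem {G : SimpleGraph V} {T C C' : Set V} {u : V}
    (h : IsCompOf G T C) (h' : IsCompOf G T C') (hu : u ∈ C) (hu' : u ∈ C') : C = C' := by
  obtain ⟨v, hv, rfl⟩ := h
  obtain ⟨v', hv', rfl⟩ := h'
  have hvv' : ReachIn G T v v' := reachIn_trans (reachIn_symm hu) hu'
  ext w
  exact ⟨fun hw => reachIn_trans hw hvv', fun hw => reachIn_trans hw (reachIn_symm hvv')⟩

lemma walk_cross {G : SimpleGraph V} {T : Set V} {a b : V} (p : G.Walk a b) :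
    a ∈ Tᶜ → b ∈ T → ∃ x ∈ Tᶜ, ∃ y ∈ T, G.Adj x y ∧ ReachIn G Tᶜ a x := by
  induction p with
  | nil => intro ha hb; exact absurd hb ha
  | @cons a w b h p ih =>
    intro ha hb
    by_cases hw : w ∈ T
    · exact ⟨a, ha, w, hw, h, reachIn_refl ha⟩
    · obtain ⟨x, hx, y, hy, hxy, hr⟩ := ih hw hb
      exact ⟨x, hx, y, hy, hxy, reachIn_trans (adj_reachIn h ha hw) hr⟩

lemma comp_adj {G : SimpleGraph V} (hG : G.Connected) {S D : Set V} (hSne : S.Nonempty)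
    (hD : IsCompOf G Sᶜ D) :
    ∃ x ∈ D, ∃ y ∈ S, G.Adj x y := by
  obtain ⟨v, hv, rfl⟩ := hD
  obtain ⟨s, hs⟩ := hSne
  obtain ⟨p⟩ := hG.preconnected v s
  obtain ⟨x, hx, y, hy, hxy, hr⟩ := walk_cross p hv hs
  exact ⟨x, reachIn_symm hr, y, hy, hxy⟩

theorem stmt1 [Fintype V] (G : SimpleGraph V) [DecidableRel G.Adj]
    (hG : G.Connected) (S : Set V) (k : ℕ) (hS : IsSafeSet G S) (hk : S.ncard = k) :
    {C : Set V | IsCompOf G Sᶜ C}.ncard ≤ k * G.maxDegree ∧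
    (∀ C : Set V, IsCompOf G Sᶜ C → C.ncard ≤ k) ∧
    Fintype.card V ≤ k + k ^ 2 * G.maxDegree := by
  classical
  have hne : Nonempty V := hG.nonempty
  obtain ⟨hSne, hsafe⟩ := hS
  -- part 2
  have part2 : ∀ C : Set V, IsCompOf G Sᶜ C → C.ncard ≤ k := by
    intro D hD
    obtain ⟨x, hxD, y, hyS, hxy⟩ := comp_adj hG hSne hD
    set C : Set V := {u | ReachIn G S u y} with hCdef
    have hC : IsCompOf G S C := ⟨y, hyS, rfl⟩
    have hadj : ∃ a ∈ C, ∃ b ∈ D, G.Adj a b := ⟨y, reachIn_refl hyS, x, hxD, hxy.symm⟩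
    calc D.ncard ≤ C.ncard := hsafe C D hC hD hadj
      _ ≤ S.ncard := Set.ncard_le_ncard hC.subset S.toFinite
      _ = k := hk
  -- part 1
  set comps : Set (Set V) := {C : Set V | IsCompOf G Sᶜ C} with hcomps
  set N : Set V := {b | ∃ s ∈ S, G.Adj s b} with hN
  have hex : ∀ D ∈ comps, ∃ x, x ∈ D ∧ x ∈ N := by
    intro D hD
    obtain ⟨x, hxD, y, hyS, hxy⟩ := comp_adj hG hSne hD
    exact ⟨x, hxD, y, hyS, hxy.symm⟩
  set f : Set V → V := fun D => if h : ∃ x, x ∈ D ∧ x ∈ N then h.choose else hne.some with hf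
  have hfD : ∀ D ∈ comps, f D ∈ D ∧ f D ∈ N := by
    intro D hD
    have h := hex D hD
    simp only [hf, dif_pos h]
    exact h.choose_spec
  have hNle : N.ncard ≤ k * G.maxDegree := by
    have hsub : N ⊆ ↑(S.toFinite.toFinset.biUnion (fun s => G.neighborFinset s)) := by
      intro b hb
      obtain ⟨s, hs, hsb⟩ := hb
      simp only [Finset.coe_biUnion, Set.mem_iUnion]
      exact ⟨s, (S.toFinite.mem_toFinset).mpr hs, by simp [SimpleGraph.mem_neighborFinset, hsb]⟩
    calc N.ncard ≤ (S.toFinite.toFinset.biUnion (fun s => G.neighborFinset s) : Set V).ncard :=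
          Set.ncard_le_ncard hsub (Set.toFinite _)
      _ = (S.toFinite.toFinset.biUnion (fun s => G.neighborFinset s)).card :=
          Set.ncard_coe_finset _
      _ ≤ ∑ s ∈ S.toFinite.toFinset, (G.neighborFinset s).card := Finset.card_biUnion_le
      _ ≤ ∑ _s ∈ S.toFinite.toFinset, G.maxDegree := by
          refine Finset.sum_le_sum fun s _ => ?_
          rw [← SimpleGraph.degree]
          exact G.degree_le_maxDegree s
      _ = S.ncard * G.maxDegree := by
          rw [Finset.sum_const, smul_eq_mul, ← Set.ncard_eq_toFinset_card S S.toFinite]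
      _ = k * G.maxDegree := by rw [hk]
  have part1 : comps.ncard ≤ k * G.maxDegree := by
    refine le_trans (Set.ncard_le_ncard_of_injOn f (fun D hD => (hfD D hD).2) ?_ N.toFinite) hNle
    intro D hD D' hD' hff
    exact IsCompOf.eq_of_mem hD hD' (hfD D hD).1 (hff ▸ (hfD D' hD').1)
  refine ⟨part1, part2, ?_⟩
  -- part 3
  have hcover : Sᶜ ⊆ ⋃ C ∈ comps, C := by
    intro v hv
    refine Set.mem_iUnion₂.mpr ⟨{u | ReachIn G Sᶜ u v}, ⟨v, hv, rfl⟩, reachIn_refl hv⟩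
  have hcompl : (Sᶜ : Set V).ncard ≤ comps.ncard * k := by
    set F : Finset (Set V) := comps.toFinite.toFinset with hF
    have hsub2 : (Sᶜ : Set V).toFinite.toFinset ⊆ F.biUnion (fun C => C.toFinite.toFinset) := by
      intro v hv
      rw [Set.Finite.mem_toFinset] at hv
      obtain ⟨C, hC, hvC⟩ := Set.mem_iUnion₂.mp (hcover hv)
      exact Finset.mem_biUnion.mpr ⟨C, (comps.toFinite.mem_toFinset).mpr hC, (C.toFinite.mem_toFinset).mpr hvC⟩
    calc (Sᶜ : Set V).ncard = (Sᶜ : Set V).toFinite.toFinset.card :=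
          (Set.ncard_eq_toFinset_card _ _)
      _ ≤ (F.biUnion (fun C => C.toFinite.toFinset)).card := Finset.card_le_card hsub2
      _ ≤ ∑ C ∈ F, (C.toFinite.toFinset).card := Finset.card_biUnion_le
      _ ≤ ∑ _C ∈ F, k := by
          refine Finset.sum_le_sum fun C hC => ?_
          rw [← Set.ncard_eq_toFinset_card]
          exact part2 C (by simpa [hF] using hC)
      _ = F.card * k := by rw [Finset.sum_const, smul_eq_mul]
      _ = comps.ncard * k := by rw [hF, ← Set.ncard_eq_toFinset_card]
  calc Fintype.card V = S.ncard + (Sᶜ : Set V).ncard := by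
        rw [← Nat.card_eq_fintype_card, ← Set.ncard_add_ncard_compl S]
    _ ≤ k + comps.ncard * k := by rw [hk]; exact Nat.add_le_add_left hcompl _
    _ ≤ k + (k * G.maxDegree) * k := Nat.add_le_add_left (Nat.mul_le_mul_right _ part1) _
    _ = k + k ^ 2 * G.maxDegree := by ring
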